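/- Let $(R,\mathfrak{m})$ be a Noetherian local ring and $Q$ a finitely generated $R$-module. Then there are only finitely many isomorphism classes of $R$-modules that occur as direct summands of $Q$. -/

import Mathlib

open IsLocalRing CategoryTheory

noncomputable section

/-- The depth of a module over a local ring: the supremum of lengths of
regular sequences contained in the maximal ideal. -/
def moduleDepth (R M : Type) [CommRing R] [IsLocalRing R]
    [AddCommGroup M] [Module R M] : ℕ∞ :=
  sSup {n : ℕ∞ | ∃ rs : List R, (rs.length : ℕ∞) = n ∧
    (∀ r ∈ rs, r ∈ maximalIdeal R) ∧ RingTheory.Sequence.IsRegular M rs}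

/-- A maximal Cohen-Macaulay module over a local ring: finitely generated, nonzero,
with depth equal to the Krull dimension of the ring. -/
def IsMCM (R M : Type) [CommRing R] [IsLocalRing R]
    [AddCommGroup M] [Module R M] : Prop :=
  Module.Finite R M ∧ Nontrivial M ∧ (moduleDepth R M : WithBot ℕ∞) = ringKrullDim R

/-- A Cohen-Macaulay local ring. -/
def IsCMLocalRing (R : Type) [CommRing R] [IsLocalRing R] : Prop :=
  (moduleDepth R R : WithBot ℕ∞) = ringKrullDim R

/-- The Ext group `Ext^n_R(M, N)` as an `R`-module. -/
def ExtMod (R : Type) [CommRing R] (n : ℕ) (M N : Type)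
    [AddCommGroup M] [Module R M] [AddCommGroup N] [Module R N] : Type :=
  ((Ext R (ModuleCat R) n).obj (Opposite.op (ModuleCat.of R M))).obj (ModuleCat.of R N)

instance (R : Type) [CommRing R] (n : ℕ) (M N : Type)
    [AddCommGroup M] [Module R M] [AddCommGroup N] [Module R N] :
    AddCommGroup (ExtMod R n M N) := by
  unfold ExtMod; infer_instance

instance (R : Type) [CommRing R] (n : ℕ) (M N : Type)
    [AddCommGroup M] [Module R M] [AddCommGroup N] [Module R N] :
    Module R (ExtMod R n M N) := by
  unfold ExtMod; infer_instance

/-- An indecomposable module. -/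
def IsIndecomposable (R M : Type) [CommRing R] [AddCommGroup M] [Module R M] : Prop :=
  Nontrivial M ∧ ∀ N₁ N₂ : Submodule R M, IsCompl N₁ N₂ → N₁ = ⊥ ∨ N₂ = ⊥

/-- Countable Cohen-Macaulay type: there is a countable set of finitely presented
modules containing, up to isomorphism, all maximal Cohen-Macaulay modules. -/
def HasCountableCMType (R : Type) [CommRing R] [IsLocalRing R] : Prop :=
  ∃ S : Set (Σ n : ℕ, Submodule R (Fin n → R)), S.Countable ∧
    ∀ (M : Type) [AddCommGroup M] [Module R M], IsMCM R M →
      ∃ s ∈ S, Nonempty (M ≃ₗ[R] ((Fin s.1 → R) ⧸ s.2))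

/-- Injective dimension at most `n`, via vanishing of Ext. -/
def HasInjDimLE (R Y : Type) [CommRing R] [AddCommGroup Y] [Module R Y] (n : ℕ) : Prop :=
  ∀ (M : Type) [AddCommGroup M] [Module R M] (i : ℕ), n < i → Subsingleton (ExtMod R i M Y)

/-- Finite injective dimension. -/
def HasFiniteInjDim (R Y : Type) [CommRing R] [AddCommGroup Y] [Module R Y] : Prop :=
  ∃ n, HasInjDimLE R Y n

/-- A regular local ring: Noetherian local, whose maximal ideal is generated by
`dim R` elements. -/
def IsRegularLocalRing' (A : Type) [CommRing A] : Prop :=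
  IsNoetherianRing A ∧ ∃ h : IsLocalRing A, ∃ s : Finset A,
    Ideal.span (s : Set A) = @IsLocalRing.maximalIdeal A _ h ∧
    ((s.card : ℕ∞) : WithBot ℕ∞) = ringKrullDim A

/-- A catenary ring: any two saturated chains of primes with the same endpoints
have the same length. -/
def IsCatenaryRing (A : Type) [CommRing A] : Prop :=
  ∀ c d : RelSeries ({p : PrimeSpectrum A × PrimeSpectrum A | p.1 ⋖ p.2} :
      SetRel (PrimeSpectrum A) (PrimeSpectrum A)),
    c.head = d.head → c.last = d.last → c.length = d.length

/-- A regular (not necessarily local) Noetherian ring: all localizations at primes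
are regular local rings. -/
def IsRegularRing' (A : Type) [CommRing A] : Prop :=
  ∀ p : PrimeSpectrum A, IsRegularLocalRing' (Localization.AtPrime p.asIdeal)

/-- An excellent local ring: Noetherian, universally catenary, J-2 (regular loci of
finite type algebras are open), with geometrically regular formal fibres. -/
def IsExcellentLocalRing (R : Type) [CommRing R] [IsLocalRing R] : Prop :=
  IsNoetherianRing R ∧
  (∀ n : ℕ, IsCatenaryRing (MvPolynomial (Fin n) R)) ∧
  (∀ (A : Type) [CommRing A] [Algebra R A], Algebra.FiniteType R A →
      IsOpen {p : PrimeSpectrum A | IsRegularLocalRing' (Localization.AtPrime p.asIdeal)}) ∧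
  (∀ p : PrimeSpectrum R,
    ∀ (L : Type) [Field L] [Algebra (ResidueField (Localization.AtPrime p.asIdeal)) L],
      FiniteDimensional (ResidueField (Localization.AtPrime p.asIdeal)) L →
      letI : Algebra R L := ((algebraMap (ResidueField (Localization.AtPrime p.asIdeal)) L).comp
        (algebraMap R (ResidueField (Localization.AtPrime p.asIdeal)))).toAlgebra
      IsRegularRing' (TensorProduct R L (AdicCompletion (maximalIdeal R) R)))

/-- A free resolution of `M` by finitely generated free modules. -/
structure FreeRes (R : Type) [CommRing R] (M : Type) [AddCommGroup M] [Module R M] where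
  rank : ℕ → ℕ
  aug : (Fin (rank 0) → R) →ₗ[R] M
  d : (i : ℕ) → ((Fin (rank (i+1)) → R) →ₗ[R] (Fin (rank i) → R))
  aug_surjective : Function.Surjective aug
  exact_zero : LinearMap.range (d 0) = LinearMap.ker aug
  exact_succ : ∀ i, LinearMap.range (d (i+1)) = LinearMap.ker (d i)

/-- A minimal free resolution over a local ring. -/
structure MinFreeRes (R : Type) [CommRing R] [IsLocalRing R]
    (M : Type) [AddCommGroup M] [Module R M] extends FreeRes R M where
  minimal_aug : LinearMap.ker aug ≤ (maximalIdeal R) • ⊤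
  minimal : ∀ i, LinearMap.range (d i) ≤ (maximalIdeal R) • ⊤

/-- `S` is (isomorphic to) the `n`-th syzygy of `M` in the given free resolution;
the `0`-th syzygy is `M` itself, and for `n ≥ 1` it is the image of `d (n-1)`. -/
def FreeRes.IsSyzygy {R : Type} [CommRing R] {M : Type} [AddCommGroup M] [Module R M]
    (F : FreeRes R M) (n : ℕ) (S : Type) [AddCommGroup S] [Module R S] : Prop :=
  match n with
  | 0 => Nonempty (S ≃ₗ[R] M)
  | k+1 => Nonempty (S ≃ₗ[R] LinearMap.range (F.d k))

/-- A canonical module for a Cohen-Macaulay local ring: a maximal Cohen-Macaulay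
module of finite injective dimension whose endomorphism ring is `R`. -/
def HasCanonicalModule (R : Type) [CommRing R] [IsLocalRing R] : Prop :=
  ∃ ω : ModuleCat R, Module.Finite R ω ∧ IsMCM R ω ∧ HasFiniteInjDim R ω ∧
    Nonempty (Module.End R ω ≃ₐ[R] R)

/-- The height of an ideal: the infimum of dimensions of localizations at primes
containing it. -/
def idealHeight (R : Type) [CommRing R] (J : Ideal R) : WithBot ℕ∞ :=
  sInf {h | ∃ p : PrimeSpectrum R, J ≤ p.asIdeal ∧
    h = ringKrullDim (Localization.AtPrime p.asIdeal)}

end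

section AuxLemmas

section RingLemmas

variable {E : Type*} [Ring E]

/-- H1a: an element of the Jacobson radical has `1 - z` a unit. -/
lemma aux_isUnit_one_sub_of_mem_jacobson_bot {z : E}
    (hz : z ∈ Ideal.jacobson (⊥ : Ideal E)) : IsUnit (1 - z) := by
  have key : ∀ w : E, w ∈ Ideal.jacobson (⊥ : Ideal E) → ∃ u : E, u * (1 - w) = 1 := by
    intro w hw
    have htop : Ideal.span {1 - w} = ⊤ := by
      by_contra hne
      obtain ⟨M, hM, hle⟩ := Ideal.exists_le_maximal _ hne
      have h1 : (1 : E) - w ∈ M := hle (Ideal.subset_span rfl)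
      have h2 : w ∈ M := by
        rw [Ideal.jacobson] at hw
        exact Ideal.mem_sInf.1 hw ⟨bot_le, hM⟩
      have : (1 : E) ∈ M := by simpa using M.add_mem h1 h2
      exact hM.ne_top (M.eq_top_iff_one.2 this)
    have h1 : (1 : E) ∈ Ideal.span {1 - w} := htop ▸ Submodule.mem_top
    obtain ⟨u, hu⟩ := Submodule.mem_span_singleton.1 h1
    exact ⟨u, by simpa using hu⟩
  obtain ⟨u, hu⟩ := key z hz
  -- u = 1 + u * z
  have hu' : u = 1 - (-(u * z)) := by
    have h := hu
    rw [mul_sub, mul_one, sub_eq_iff_eq_add] at h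
    rw [sub_neg_eq_add]; exact h
  have hmem : -(u * z) ∈ Ideal.jacobson (⊥ : Ideal E) :=
    neg_mem (Ideal.mul_mem_left _ _ hz)
  obtain ⟨v, hv⟩ := key _ hmem
  rw [← hu'] at hv
  -- v * u = 1, u * (1 - z) = 1  ⇒  v = 1 - z and 1 - z is a unit
  have hveq : v = 1 - z := by
    calc v = v * (u * (1 - z)) := by rw [hu, mul_one]
    _ = (v * u) * (1 - z) := (mul_assoc _ _ _).symm
    _ = 1 - z := by rw [hv, one_mul]
  exact ⟨⟨1 - z, u, by rw [← hveq]; exact hv, hu⟩, rfl⟩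

/-- H1: membership in the Jacobson radical via left quasi-regularity. -/
lemma aux_mem_jacobson_bot_iff {z : E} :
    z ∈ Ideal.jacobson (⊥ : Ideal E) ↔ ∀ y : E, IsUnit (1 - y * z) := by
  constructor
  · intro hz y
    exact aux_isUnit_one_sub_of_mem_jacobson_bot (Ideal.mul_mem_left _ _ hz)
  · intro h
    rw [Ideal.jacobson]
    refine Ideal.mem_sInf.2 ?_
    rintro M ⟨-, hM⟩
    by_contra hzM
    have hlt : M < M ⊔ Submodule.span E {z} := by
      refine lt_of_le_of_ne le_sup_left ?_
      intro hEq
      exact hzM (hEq ▸ (le_sup_right : Submodule.span E {z} ≤ M ⊔ _)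
        (Submodule.mem_span_singleton_self z))
    have htop : M ⊔ Submodule.span E {z} = ⊤ := (Ideal.isMaximal_def.1 hM).2 _ hlt
    have h1 : (1 : E) ∈ M ⊔ Submodule.span E {z} := htop ▸ Submodule.mem_top
    obtain ⟨m, hm, s, hs, hms⟩ := Submodule.mem_sup.1 h1
    obtain ⟨y, hy⟩ := Submodule.mem_span_singleton.1 hs
    have hmeq : m = 1 - y * z := by rw [← hms, ← hy]; simp [smul_eq_mul]
    have : IsUnit m := hmeq ▸ h y
    exact hM.ne_top (M.eq_top_of_isUnit_mem hm this)

end RingLemmas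


section Lifting

variable {E S : Type*} [Ring E] [Ring S]

/-- Units lift along a surjection with quasi-regular kernel. -/
lemma aux_isUnit_of_map (σ : E →+* S) (hsur : Function.Surjective σ)
    (hker : ∀ z : E, σ z = 0 → IsUnit (1 - z)) {w : E} (hw : IsUnit (σ w)) : IsUnit w := by
  obtain ⟨u, hu⟩ := hw
  obtain ⟨v, hv⟩ := hsur (↑u⁻¹)
  -- left inverse
  have h1 : σ (1 - v * w) = 0 := by
    rw [map_sub, map_mul, hv, ← hu, map_one, Units.inv_mul, sub_self]
  obtain ⟨c, hc⟩ := hker _ h1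
  have hcv : (↑c⁻¹ : E) * (v * w) = 1 := by
    have h2 : (c : E) = v * w := by rw [hc, sub_sub_cancel]
    rw [← h2]; exact c.inv_mul
  -- right inverse
  have h2 : σ (1 - w * v) = 0 := by
    rw [map_sub, map_mul, hv, ← hu, map_one, Units.mul_inv, sub_self]
  obtain ⟨d, hd⟩ := hker _ h2
  have hwv : (w * v) * ↑d⁻¹ = 1 := by
    have h3 : (d : E) = w * v := by rw [hd, sub_sub_cancel]
    rw [← h3]; exact d.mul_inv
  -- combine
  have hli : (↑c⁻¹ * v) * w = 1 := by rw [mul_assoc]; exact hcv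
  have hri : w * (v * ↑d⁻¹) = 1 := by rw [← mul_assoc]; exact hwv
  have : (↑c⁻¹ * v : E) = v * ↑d⁻¹ := by
    calc (↑c⁻¹ * v : E) = (↑c⁻¹ * v) * (w * (v * ↑d⁻¹)) := by rw [hri, mul_one]
    _ = ((↑c⁻¹ * v) * w) * (v * ↑d⁻¹) := by simp only [mul_assoc]
    _ = v * ↑d⁻¹ := by rw [hli, one_mul]
  exact ⟨⟨w, ↑c⁻¹ * v, by rw [this]; exact hri, hli⟩, rfl⟩

/-- Lifting an idempotent equivalence along a surjection with quasi-regular kernel. -/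
lemma aux_lift_idem_equiv (σ : E →+* S) (hsur : Function.Surjective σ)
    (hker : ∀ z : E, σ z = 0 → IsUnit (1 - z)) {e f : E} (he : e * e = e) (hf : f * f = f)
    (a b : S) (hab : a * b = σ f) (hba : b * a = σ e) :
    ∃ A B : E, f * A * e = A ∧ e * B * f = B ∧ A * B = f ∧ B * A = e := by
  have hfS : σ f * σ f = σ f := by rw [← map_mul, hf]
  have heS : σ e * σ e = σ e := by rw [← map_mul, he]
  set a' : S := σ f * a * σ e with ha'
  set b' : S := σ e * b * σ f with hb'
  have hab' : a' * b' = σ f := by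
    calc a' * b' = σ f * (a * ((σ e * σ e) * b)) * σ f := by
          simp only [ha', hb', mul_assoc]
    _ = σ f * (a * (b * (a * b))) * σ f := by rw [heS, ← hba]; simp only [mul_assoc]
    _ = σ f * ((a * b) * (a * b)) * σ f := by simp only [mul_assoc]
    _ = σ f := by rw [hab, hfS, hfS, hfS]
  have hba' : b' * a' = σ e := by
    calc b' * a' = σ e * (b * ((σ f * σ f) * a)) * σ e := by
          simp only [ha', hb', mul_assoc]
    _ = σ e * (b * (a * (b * a))) * σ e := by rw [hfS, ← hab]; simp only [mul_assoc]
    _ = σ e * ((b * a) * (b * a)) * σ e := by simp only [mul_assoc]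
    _ = σ e := by rw [hba, heS, heS, heS]
  obtain ⟨a₀, ha₀⟩ := hsur a'
  obtain ⟨b₀, hb₀⟩ := hsur b'
  set A : E := f * a₀ * e with hA
  set B : E := e * b₀ * f with hB
  have hσA : σ A = a' := by
    rw [hA, map_mul, map_mul, ha₀, ha', ← mul_assoc, ← mul_assoc, hfS]
    simp only [mul_assoc, heS]
  have hσB : σ B = b' := by
    rw [hB, map_mul, map_mul, hb₀, hb', ← mul_assoc, ← mul_assoc, heS]
    simp only [mul_assoc, hfS]
  -- z := f - A * B is in the kernel
  have hz : σ (f - A * B) = 0 := by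
    rw [map_sub, map_mul, hσA, hσB, hab']; simp
  set z : E := f - A * B with hzdef
  have hfA : f * A = A := by rw [hA]; simp only [← mul_assoc]; rw [hf]
  have hAe : A * e = A := by rw [hA]; simp only [mul_assoc, he]
  have heB : e * B = B := by rw [hB]; simp only [← mul_assoc]; rw [he]
  have hBf : B * f = B := by rw [hB]; simp only [mul_assoc, hf]
  have hfz : f * z = z := by rw [hzdef, mul_sub, hf, ← mul_assoc, hfA]
  have hzf : z * f = z := by
    rw [hzdef, sub_mul, hf, mul_assoc, hBf]
  obtain hiu := hker _ hz
  set u := hiu.unit with hudef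
  have huval : (u : E) = 1 - z := hiu.unit_spec
  have hcommf : (↑u⁻¹ : E) * f = f * ↑u⁻¹ := by
    have h1 : (u : E) * f = f * u := by
      rw [huval, sub_mul, mul_sub, one_mul, mul_one, hfz, hzf]
    calc (↑u⁻¹ : E) * f = ↑u⁻¹ * (f * u) * ↑u⁻¹ := by
          simp only [mul_assoc]; rw [u.mul_inv, mul_one]
    _ = ↑u⁻¹ * (u * f) * ↑u⁻¹ := by rw [h1]
    _ = f * ↑u⁻¹ := by simp only [← mul_assoc]; rw [u.inv_mul, one_mul]
  set B₂ : E := B * ↑u⁻¹ with hB₂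
  have hAB₂ : A * B₂ = f := by
    have h1 : A * B = f - z := by rw [hzdef, sub_sub_cancel]
    have h2 : f - z = f * (1 - z) := by rw [mul_sub, mul_one, hfz]
    rw [hB₂, ← mul_assoc, h1, h2, ← huval, mul_assoc, u.mul_inv, mul_one]
  -- g := B₂ * A is an idempotent congruent to e
  set g : E := B₂ * A with hg
  have hgidem : g * g = g := by
    rw [hg, mul_assoc, ← mul_assoc A, hAB₂, ← mul_assoc, mul_assoc B₂ f, hfA]
  have heg : e * g = g := by rw [hg, hB₂]; simp only [← mul_assoc]; rw [heB]
  have hge : g * e = g := by rw [hg, mul_assoc, hAe]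
  have hσinv : σ (↑u⁻¹ : E) = 1 := by
    have h1 : σ (u : E) = 1 := by rw [huval, map_sub, hz, map_one, sub_zero]
    have := congrArg σ u.mul_inv
    rw [map_mul, h1, one_mul, map_one] at this
    exact this
  have hσg : σ g = σ e := by
    rw [hg, hB₂, map_mul, map_mul, hσB, hσinv, mul_one, hσA, hba']
  have hh : σ (e - g) = 0 := by rw [map_sub, hσg, sub_self]
  set h : E := e - g with hhdef
  have hhidem : h * h = h := by
    rw [hhdef, sub_mul, mul_sub, mul_sub, he, heg, hge, hgidem]; simp
  obtain hwu := hker _ hh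
  have hzero : h = 0 := by
    have h1 : h * (1 - h) = 0 := by rw [mul_sub, mul_one, hhidem, sub_self]
    set w := hwu.unit with hw
    have hwval : (w : E) = 1 - h := hwu.unit_spec
    calc h = h * (w * ↑w⁻¹) := by rw [w.mul_inv, mul_one]
    _ = (h * w) * ↑w⁻¹ := by rw [mul_assoc]
    _ = 0 := by rw [hwval, h1, zero_mul]
  have hge' : g = e := by
    have h4 := hzero
    rw [hhdef] at h4
    exact (sub_eq_zero.mp h4).symm
  refine ⟨A, B₂, ?_, ?_, hAB₂, by rw [← hg, hge']⟩
  · rw [hA]; simp only [← mul_assoc, hf]; simp only [mul_assoc, he]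
  · have hB₂f : B₂ * f = B₂ := by rw [hB₂, mul_assoc, hcommf, ← mul_assoc, hBf]
    have heB₂ : e * B₂ = B₂ := by rw [hB₂, ← mul_assoc, heB]
    rw [heB₂, hB₂f]

end Lifting


section SpanEquiv

variable {S : Type*} [Ring S]

/-- From an isomorphism of principal left ideals generated by idempotents,
extract elements witnessing the equivalence of the idempotents. -/
lemma aux_span_equiv_gives {ε δ : S} (hε : ε * ε = ε) (hδ : δ * δ = δ)
    (ψ : (Submodule.span S {ε} : Submodule S S) ≃ₗ[S] (Submodule.span S {δ} : Submodule S S)) :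
    ∃ a b : S, a * b = δ ∧ b * a = ε := by
  have hmemε : ε ∈ Submodule.span S {ε} := Submodule.mem_span_singleton_self ε
  have hmemδ : δ ∈ Submodule.span S {δ} := Submodule.mem_span_singleton_self δ
  set εv : (Submodule.span S {ε} : Submodule S S) := ⟨ε, hmemε⟩
  set δv : (Submodule.span S {δ} : Submodule S S) := ⟨δ, hmemδ⟩
  -- every element of span {ε} satisfies x * ε = x
  have hxε : ∀ x : (Submodule.span S {ε} : Submodule S S), (↑x : S) * ε = ↑x := by
    rintro ⟨x, hx⟩
    obtain ⟨c, rfl⟩ := Submodule.mem_span_singleton.1 hx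
    simp only [smul_eq_mul, mul_assoc, hε]
  have hxδ : ∀ x : (Submodule.span S {δ} : Submodule S S), (↑x : S) * δ = ↑x := by
    rintro ⟨x, hx⟩
    obtain ⟨c, rfl⟩ := Submodule.mem_span_singleton.1 hx
    simp only [smul_eq_mul, mul_assoc, hδ]
  have hself : ∀ x : (Submodule.span S {ε} : Submodule S S), x = (↑x : S) • εv := by
    intro x; ext; simp only [SetLike.val_smul, smul_eq_mul]; exact (hxε x).symm
  have hselfδ : ∀ y : (Submodule.span S {δ} : Submodule S S), y = (↑y : S) • δv := by
    intro y; ext; simp only [SetLike.val_smul, smul_eq_mul]; exact (hxδ y).symm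
  set b : S := ↑(ψ εv)
  set a : S := ↑(ψ.symm δv)
  have hψ : ∀ x : (Submodule.span S {ε} : Submodule S S), (↑(ψ x) : S) = ↑x * b := by
    intro x
    conv_lhs => rw [hself x]
    rw [map_smul]
    simp only [SetLike.val_smul, smul_eq_mul]; rfl
  have hψs : ∀ y : (Submodule.span S {δ} : Submodule S S), (↑(ψ.symm y) : S) = ↑y * a := by
    intro y
    conv_lhs => rw [hselfδ y]
    rw [map_smul]
    simp only [SetLike.val_smul, smul_eq_mul]; rfl
  refine ⟨a, b, ?_, ?_⟩
  · -- a * b = δ : δ = ψ (ψ.symm δv)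
    have := hψ (ψ.symm δv)
    rw [ψ.apply_symm_apply] at this
    simpa using this.symm
  · have := hψs (ψ εv)
    rw [ψ.symm_apply_apply] at this
    simpa using this.symm

end SpanEquiv

section RangeEquiv

variable {R Q : Type*} [CommRing R] [AddCommGroup Q] [Module R Q]

/-- Equivalent idempotent endomorphisms have isomorphic ranges. -/
lemma aux_range_equiv {e f A B : Module.End R Q}
    (hA : f * A * e = A) (hB : e * B * f = B) (hAB : A * B = f) (hBA : B * A = e)
    (he : e * e = e) (hf : f * f = f) :
    Nonempty ((LinearMap.range e : Submodule R Q) ≃ₗ[R] (LinearMap.range f : Submodule R Q)) := by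
  have hfA : f * A = A := by rw [← hA]; simp only [← mul_assoc, hf]
  have heB : e * B = B := by rw [← hB]; simp only [← mul_assoc, he]
  have hmapA : ∀ x ∈ LinearMap.range e, A x ∈ LinearMap.range f := by
    intro x _
    exact ⟨A x, by rw [← Module.End.mul_apply, hfA]⟩
  have hmapB : ∀ x ∈ LinearMap.range f, B x ∈ LinearMap.range e := by
    intro x _
    exact ⟨B x, by rw [← Module.End.mul_apply, heB]⟩
  have hre : ∀ x ∈ LinearMap.range e, e x = x := by
    rintro x ⟨y, rfl⟩
    rw [← Module.End.mul_apply, he]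
  have hrf : ∀ x ∈ LinearMap.range f, f x = x := by
    rintro x ⟨y, rfl⟩
    rw [← Module.End.mul_apply, hf]
  set α := A.restrict hmapA
  set β := B.restrict hmapB
  refine ⟨LinearEquiv.ofLinear α β ?_ ?_⟩
  · ext x
    have : A (B (x : Q)) = x := by
      have h1 : (A * B) (x : Q) = f (x : Q) := by rw [hAB]
      rw [hrf _ x.2] at h1
      exact h1
    simpa [α, β, LinearMap.restrict_apply] using this
  · ext x
    have : B (A (x : Q)) = x := by
      have h1 : (B * A) (x : Q) = e (x : Q) := by rw [hBA]
      rw [hre _ x.2] at h1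
      exact h1
    simpa [α, β, LinearMap.restrict_apply] using this

/-- An idempotent endomorphism attached to a direct-summand decomposition. -/
lemma aux_summand_idempotent {M M' : Type*} [AddCommGroup M] [Module R M]
    [AddCommGroup M'] [Module R M'] (φ : (M × M') ≃ₗ[R] Q) :
    ∃ e : Module.End R Q, e * e = e ∧
      Nonempty (M ≃ₗ[R] (LinearMap.range e : Submodule R Q)) := by
  set p : Module.End R (M × M') := (LinearMap.inl R M M').comp (LinearMap.fst R M M')
  set e : Module.End R Q := (φ.toLinearMap.comp p).comp φ.symm.toLinearMap
  have hp : p.comp p = p := by ext x <;> rfl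
  refine ⟨e, ?_, ?_⟩
  · ext q
    show φ (p (φ.symm (φ (p (φ.symm q))))) = φ (p (φ.symm q))
    rw [φ.symm_apply_apply]
    show φ ((p.comp p) (φ.symm q)) = _
    rw [hp]
  · -- M ≃ range e via x ↦ φ (x, 0)
    set ι : M →ₗ[R] Q := φ.toLinearMap.comp (LinearMap.inl R M M')
    have hinj : Function.Injective ι := by
      intro x y hxy
      have := φ.injective hxy
      exact congrArg Prod.fst this
    have hrange : LinearMap.range ι = LinearMap.range e := by
      apply le_antisymm
      · rintro _ ⟨x, rfl⟩
        exact ⟨φ (x, 0), by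
          show φ (p (φ.symm (φ (x, 0)))) = φ (x, 0)
          rw [φ.symm_apply_apply]; rfl⟩
      · rintro _ ⟨q, rfl⟩
        exact ⟨(φ.symm q).1, rfl⟩
    exact ⟨(LinearEquiv.ofInjective ι hinj).trans (LinearEquiv.ofEq _ _ hrange)⟩

end RangeEquiv


section Semisimple

variable {S : Type*} [Ring S]

/-- An artinian ring with trivial Jacobson radical is semisimple. -/
lemma aux_isSemisimpleRing_of_jacobson_bot [IsArtinianRing S]
    (hJ : Ideal.jacobson (⊥ : Ideal S) = ⊥) : IsSemisimpleRing S := by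
  classical
  -- find a finite set of maximal left ideals with trivial intersection
  have hwf : WellFoundedLT (Ideal S) := inferInstance
  set F : Set (Ideal S) := {I | ∃ t : Finset (Ideal S), (∀ M ∈ t, M.IsMaximal) ∧ I = t.inf id}
    with hF
  have hFne : F.Nonempty := ⟨⊤, ∅, by simp, by simp⟩
  obtain ⟨I₀, hI₀F, hI₀min⟩ := hwf.wf.has_min F hFne
  obtain ⟨t₀, ht₀max, ht₀inf⟩ := hI₀F
  have hI₀bot : I₀ = ⊥ := by
    have hle : ∀ M : Ideal S, M.IsMaximal → I₀ ≤ M := by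
      intro M hM
      by_contra hnle
      have hlt : I₀ ⊓ M < I₀ := lt_of_le_of_ne inf_le_left (by
        intro hEq
        exact hnle (hEq ▸ inf_le_right))
      refine hI₀min (I₀ ⊓ M) ⟨insert M t₀, ?_, ?_⟩ hlt
      · intro N hN
        rcases Finset.mem_insert.1 hN with h | h
        · exact h ▸ hM
        · exact ht₀max N h
      · rw [Finset.inf_insert, ht₀inf, inf_comm]
        rfl
    have : I₀ ≤ Ideal.jacobson (⊥ : Ideal S) := by
      rw [Ideal.jacobson]
      exact le_sInf (by rintro M ⟨-, hM⟩; exact hle M hM)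
    exact le_bot_iff.1 (hJ ▸ this)
  -- embed S into the product of the S ⧸ M for M ∈ t₀
  set Φ : S →ₗ[S] ((M : t₀) → S ⧸ (M : Ideal S)) :=
    LinearMap.pi (fun M => (M : Ideal S).mkQ)
  have hinj : Function.Injective Φ := by
    intro x y hxy
    have hmem : ∀ M : Ideal S, M ∈ t₀ → x - y ∈ M := by
      intro M hM
      have := congrFun hxy ⟨M, hM⟩
      simp only [Φ, LinearMap.pi_apply] at this
      have h0 : (M : Ideal S).mkQ (x - y) = 0 := by
        rw [map_sub, this, sub_self]
      exact (Submodule.Quotient.mk_eq_zero M).1 (by rwa [Submodule.mkQ_apply] at h0)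
    have hbot : x - y ∈ (⊥ : Ideal S) := by
      rw [← hI₀bot, ht₀inf]
      exact (Submodule.mem_finsetInf).2 fun M hM => hmem M hM
    rw [Submodule.mem_bot, sub_eq_zero] at hbot
    exact hbot
  -- the target is semisimple
  haveI hsimple : ∀ M : t₀, IsSimpleModule S (S ⧸ (M : Ideal S)) := fun M =>
    isSimpleModule_iff_isCoatom.2 (Ideal.isMaximal_def.1 (ht₀max M M.2))
  haveI : IsSemisimpleModule S ((M : t₀) → S ⧸ (M : Ideal S)) := by
    refine isSemisimpleModule_of_isSemisimpleModule_submodule'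
      (p := fun M => LinearMap.range (LinearMap.single S _ M)) (fun M => ?_) ?_
    · exact IsSemisimpleModule.congr
        (LinearEquiv.ofInjective (LinearMap.single S _ M)
          (by rw [LinearMap.coe_single]; exact Pi.single_injective M)).symm
    · simp_rw [LinearMap.range_eq_map, Submodule.iSup_map_single, Submodule.pi_top]
  haveI : IsSemisimpleModule S ↥(LinearMap.range Φ) := inferInstance
  exact IsSemisimpleModule.congr (N := S) (M := ↥(LinearMap.range Φ))
    (LinearEquiv.ofInjective Φ hinj)

end Semisimple


section Counting

variable {S : Type*} [Ring S]

/-- Over a semisimple ring, every left ideal is isomorphic to one of finitely many modules. -/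
lemma aux_finitely_many_ideal_classes [IsSemisimpleRing S] :
    ∃ (n : ℕ) (T : Fin n → Submodule S S),
      ∀ P : Submodule S S, ∃ t : Finset (Fin n),
        Nonempty (P ≃ₗ[S] (S ⧸ (t.sup T : Submodule S S))) := by
  classical
  have h04 := (IsSemisimpleModule.finite_tfae (R := S) (M := S)).out 0 4
  obtain ⟨s, hsfin, -, hssup, hssimple⟩ := h04.mp (inferInstance : Module.Finite S S)
  haveI := hsfin.fintype
  set n := Fintype.card s
  obtain ⟨eqv⟩ : Nonempty (s ≃ Fin n) := ⟨Fintype.equivFin s⟩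
  set T : Fin n → Submodule S S := fun i => ((eqv.symm i : s) : Submodule S S) with hT
  have hatom : ∀ i, IsAtom (T i) := by
    intro i
    exact isSimpleModule_iff_isAtom.1 (hssimple _ (eqv.symm i).2)
  have hcover : ∀ m ∈ s, ∃ i, T i = m := by
    intro m hm
    exact ⟨eqv ⟨m, hm⟩, by simp [hT]⟩
  refine ⟨n, T, ?_⟩
  intro P
  -- choose a maximal finset t with T-sup disjoint from P
  set G : Set (Finset (Fin n)) := {t | Disjoint P (t.sup T)} with hG
  have hGfin : G.Finite := Set.toFinite G
  have hGne : G.Nonempty := ⟨∅, by simp [hG]⟩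
  obtain ⟨t, htG, htmax⟩ : ∃ t ∈ G, ∀ t' ∈ G, id t ≤ id t' → id t = id t' := by
    obtain ⟨t, ht1, ht2⟩ := Set.Finite.exists_maximalFor id G hGfin hGne
    exact ⟨t, ht1, fun t' h1 h2 => le_antisymm h2 (ht2 h1 h2)⟩
  have hdisj : Disjoint P (t.sup T) := htG
  have hcod : ∀ i : Fin n, T i ≤ P ⊔ t.sup T := by
    intro i
    by_contra hnle
    have hTne : T i ⊓ (P ⊔ t.sup T) < T i := by
      refine lt_of_le_of_ne inf_le_left ?_
      intro hEq
      exact hnle (hEq ▸ inf_le_right)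
    have hTdisj : Disjoint (T i) (P ⊔ t.sup T) :=
      disjoint_iff.2 ((hatom i).2 _ hTne)
    have hnew : Disjoint P (t.sup T ⊔ T i) :=
      (hdisj.disjoint_sup_right_of_disjoint_sup_left (hTdisj.symm)).symm.symm
    have hit : i ∉ t := by
      intro hit
      exact hnle (le_trans (Finset.le_sup hit) le_sup_right)
    have hins : insert i t ∈ G := by
      rw [hG, Set.mem_setOf_eq, Finset.sup_insert, sup_comm]
      exact hnew
    have := htmax _ hins (Finset.subset_insert i t)
    simp only [id] at this
    exact hit (this ▸ Finset.mem_insert_self i t)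
  have hcodis : Codisjoint P (t.sup T) := by
    rw [codisjoint_iff_le_sup]
    rw [← hssup]
    refine sSup_le ?_
    intro m hm
    obtain ⟨i, rfl⟩ := hcover m hm
    exact hcod i
  have hcompl : IsCompl P (t.sup T) := ⟨hdisj, hcodis⟩
  exact ⟨t, ⟨(Submodule.quotientEquivOfIsCompl _ _ hcompl.symm).symm⟩⟩

end Counting


open IsLocalRing

section ArtinianTransfer

/-- A finite algebra over a local ring killed by the maximal ideal is an artinian ring. -/
lemma aux_isArtinianRing_of_finite_of_torsion {R S : Type*} [CommRing R] [IsLocalRing R]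
    [Ring S] [Module R S] [Module.Finite R S]
    (hcomp : ∀ (r : R) (x : S), r • x = (r • (1 : S)) * x)
    (hm : ∀ r ∈ maximalIdeal R, ∀ x : S, r • x = 0) : IsArtinianRing S := by
  classical
  have htor : Module.IsTorsionBySet R S (maximalIdeal R : Set R) := by
    intro x r
    exact hm r.1 r.2 x
  letI : Module (ResidueField R) S := htor.module
  have hmk : ∀ (r : R) (x : S), (residue R r) • x = r • x :=
    fun r x => htor.mk_smul r x
  -- S is finite over k
  haveI : Module.Finite (ResidueField R) S := by
    obtain ⟨g, hg⟩ := (Module.finite_def.1 (inferInstance : Module.Finite R S))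
    refine Module.finite_def.2 ⟨g, ?_⟩
    rw [eq_top_iff]
    rw [eq_top_iff] at hg
    intro x hx
    have hxR : x ∈ Submodule.span R (g : Set S) := hg Submodule.mem_top
    refine Submodule.span_induction ?_ ?_ ?_ ?_ hxR
    · intro y hy
      exact Submodule.subset_span hy
    · exact Submodule.zero_mem _
    · intro y z _ _ hy hz
      exact Submodule.add_mem _ hy hz
    · intro r y _ hy
      have : r • y = (residue R r) • y := (hmk r y).symm
      rw [this]
      exact Submodule.smul_mem _ _ hy
  haveI : IsArtinian (ResidueField R) S := isArtinian_of_fg_of_artinian'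
  -- transfer well-foundedness along the inclusion of lattices
  let F : Submodule S S → Submodule (ResidueField R) S := fun N =>
    { carrier := N
      add_mem' := fun ha hb => N.add_mem ha hb
      zero_mem' := N.zero_mem
      smul_mem' := by
        intro c x hx
        obtain ⟨r, rfl⟩ := residue_surjective (R := R) c
        show (residue R r) • x ∈ N
        rw [hmk r x, hcomp]
        exact N.smul_mem _ hx }
  have hFmono : StrictMono F := by
    intro N₁ N₂ h
    have hle : N₁ ≤ N₂ := le_of_lt h
    refine lt_of_le_of_ne (fun x hx => hle hx) ?_
    intro hEq
    refine h.ne (SetLike.ext' ?_)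
    have := congrArg (fun (W : Submodule (ResidueField R) S) => (W : Set S)) hEq
    exact this
  exact hFmono.wellFoundedLT

end ArtinianTransfer


open IsLocalRing

section EndLemmas

variable {R Q : Type*} [CommRing R] [AddCommGroup Q] [Module R Q]

/-- The endomorphism ring of a f.g. module over a Noetherian ring is Noetherian as a module. -/
lemma aux_noetherian_end [IsNoetherianRing R] [Module.Finite R Q] :
    IsNoetherian R (Module.End R Q) := by
  obtain ⟨n, g, hg⟩ := Module.Finite.exists_fin (R := R) (M := Q)
  set ψ : Module.End R Q →ₗ[R] (Fin n → Q) :=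
    { toFun := fun φ => fun i => φ (g i)
      map_add' := fun φ₁ φ₂ => rfl
      map_smul' := fun r φ => rfl }
  have hinj : Function.Injective ψ := by
    intro φ₁ φ₂ h
    ext x
    have hx : x ∈ Submodule.span R (Set.range g) := hg ▸ Submodule.mem_top
    induction hx using Submodule.span_induction with
    | mem y hy =>
      obtain ⟨i, rfl⟩ := hy
      exact congrFun h i
    | zero => simp
    | add y z _ _ hy hz => simp [map_add, hy, hz]
    | smul r y _ hy => simp [map_smul, hy]
  haveI : IsNoetherian R Q := isNoetherian_of_isNoetherianRing_of_finite R Q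
  exact isNoetherian_of_injective ψ hinj

variable [IsNoetherianRing R] [IsLocalRing R] [Module.Finite R Q]

/-- Quasi-regularity of `𝔪·End(Q)`. -/
lemma aux_isUnit_one_sub_of_mem_smul_top
    {z : Module.End R Q} (hz : z ∈ (maximalIdeal R) • (⊤ : Submodule R (Module.End R Q))) :
    IsUnit (1 - z) := by
  haveI : IsNoetherian R Q := isNoetherian_of_isNoetherianRing_of_finite R Q
  -- the range of z is inside 𝔪 • Q
  have hrange : ∀ z' ∈ (maximalIdeal R) • (⊤ : Submodule R (Module.End R Q)),
      ∀ q : Q, z' q ∈ (maximalIdeal R) • (⊤ : Submodule R Q) := by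
    intro z' hz'
    refine Submodule.smul_induction_on hz' ?_ ?_
    · intro r hr w _ q
      show r • (w q) ∈ _
      exact Submodule.smul_mem_smul hr Submodule.mem_top
    · intro x y hx hy q
      show x q + y q ∈ _
      exact Submodule.add_mem _ (hx q) (hy q)
  -- 1 - z is surjective by Nakayama
  have hsurj : Function.Surjective ((1 - z : Module.End R Q) : Q → Q) := by
    have hle : (⊤ : Submodule R Q) ≤ LinearMap.range (1 - z) ⊔
        (maximalIdeal R) • (⊤ : Submodule R Q) := by
      intro q _
      have : q = (1 - z : Module.End R Q) q + z q := by
        simp [LinearMap.sub_apply]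
      rw [this]
      exact Submodule.add_mem_sup (LinearMap.mem_range_self _ q) (hrange z hz q)
    have htople : (⊤ : Submodule R Q) ≤ LinearMap.range (1 - z) := by
      refine Submodule.le_of_le_smul_of_le_jacobson_bot (I := maximalIdeal R)
        (IsNoetherian.noetherian ⊤) ?_ ?_
      · exact maximalIdeal_le_jacobson ⊥
      · exact le_trans hle (sup_le_sup_left (smul_mono_right _ le_top) _)
    rw [← LinearMap.range_eq_top]
    exact top_le_iff.1 htople
  have hinj : Function.Injective ((1 - z : Module.End R Q) : Q → Q) :=
    IsNoetherian.injective_of_surjective_endomorphism _ hsurj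
  exact (Module.End.isUnit_iff _).2 ⟨hinj, hsurj⟩

end EndLemmas

end AuxLemmas

theorem finitely_many_direct_summands (R : Type) [CommRing R] [IsNoetherianRing R] [IsLocalRing R]
    (Q : Type) [AddCommGroup Q] [Module R Q] [Module.Finite R Q] :
    ∃ (k : ℕ) (rep : Fin k → Σ n : ℕ, Submodule R (Fin n → R)),
      ∀ (M M' : Type) [AddCommGroup M] [Module R M] [AddCommGroup M'] [Module R M'],
        Nonempty ((M × M') ≃ₗ[R] Q) →
        ∃ i, Nonempty (M ≃ₗ[R] ((Fin (rep i).1 → R) ⧸ (rep i).2)) := by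
  classical
  set E := Module.End R Q with hE
  haveI : IsNoetherian R E := aux_noetherian_end
  haveI : Module.Finite R E := Module.finite_def.2 (IsNoetherian.noetherian ⊤)
  set J : TwoSidedIdeal E := TwoSidedIdeal.jacobson ⊥ with hJ
  have hbotTS : TwoSidedIdeal.asIdeal (⊥ : TwoSidedIdeal E) = ⊥ := by
    ext x
    rw [TwoSidedIdeal.mem_asIdeal, TwoSidedIdeal.mem_bot, Ideal.mem_bot]
  have hJmem : ∀ x : E, x ∈ J ↔ x ∈ Ideal.jacobson (⊥ : Ideal E) := by
    intro x
    rw [← TwoSidedIdeal.mem_asIdeal, hJ, TwoSidedIdeal.asIdeal_jacobson, hbotTS]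
  set S := J.ringCon.Quotient with hS
  set σ : E →+* S := J.ringCon.mk' with hσ
  have hσsur : Function.Surjective σ := fun x => Quotient.inductionOn' x (fun y => ⟨y, rfl⟩)
  have hσ0 : ∀ z : E, σ z = 0 ↔ z ∈ Ideal.jacobson (⊥ : Ideal E) := by
    intro z
    rw [← hJmem]
    have h1 : σ z = σ 0 ↔ J.ringCon z 0 := RingCon.eq _
    rw [map_zero] at h1
    rw [h1, TwoSidedIdeal.rel_iff, sub_zero]
  have hker : ∀ z : E, σ z = 0 → IsUnit (1 - z) := fun z hz =>
    aux_isUnit_one_sub_of_mem_jacobson_bot ((hσ0 z).1 hz)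
  letI : Module R S :=
    { (inferInstance : DistribMulAction R S) with
      add_smul := fun r s => Quotient.ind' fun x =>
        congrArg (J.ringCon.toQuotient) (add_smul r s x)
      zero_smul := Quotient.ind' fun x =>
        congrArg (J.ringCon.toQuotient) (zero_smul R x) }
  have hcomp : ∀ (r : R) (x : S), r • x = (r • (1 : S)) * x := by
    intro r x
    refine Quotient.inductionOn' x ?_
    intro y
    show ((r • y : E) : S) = ((r • (1 : E)) * y : E)
    rw [smul_mul_assoc, one_mul]
  set σL : E →ₗ[R] S :=
    { toFun := σ
      map_add' := map_add σ
      map_smul' := fun r x => rfl } with hσL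
  haveI : Module.Finite R S := Module.Finite.of_surjective σL hσsur
  have hmE : ∀ r ∈ maximalIdeal R, ∀ x : E, σ (r • x) = 0 := by
    intro r hr x
    refine (hσ0 _).2 (aux_mem_jacobson_bot_iff.2 ?_)
    intro y
    have h2 : y * (r • x) = r • (y * x) := mul_smul_comm r y x
    refine aux_isUnit_one_sub_of_mem_smul_top (R := R) (Q := Q) (z := y * (r • x)) ?_
    rw [h2]
    exact Submodule.smul_mem_smul hr Submodule.mem_top
  have hmS : ∀ r ∈ maximalIdeal R, ∀ s : S, r • s = 0 := by
    intro r hr s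
    obtain ⟨x, rfl⟩ := hσsur s
    have h3 : r • σ x = σ (r • x) := (σL.map_smul r x).symm
    rw [h3, hmE r hr x]
  haveI : IsArtinianRing S := aux_isArtinianRing_of_finite_of_torsion hcomp hmS
  have hJS : Ideal.jacobson (⊥ : Ideal S) = ⊥ := by
    rw [eq_bot_iff]
    intro xb hxb
    obtain ⟨x, rfl⟩ := hσsur xb
    rw [Ideal.mem_bot]
    have h4 : σ x = 0 := by
      refine (hσ0 x).2 (aux_mem_jacobson_bot_iff.2 ?_)
      intro y
      have hunit : IsUnit (σ (1 - y * x)) := by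
        rw [map_sub, map_one, map_mul]
        exact aux_isUnit_one_sub_of_mem_jacobson_bot
          (Ideal.mul_mem_left _ _ hxb)
      exact aux_isUnit_of_map σ hσsur hker hunit
    exact h4
  haveI : IsSemisimpleRing S := aux_isSemisimpleRing_of_jacobson_bot hJS
  obtain ⟨n, T, hT⟩ := aux_finitely_many_ideal_classes (S := S)
  haveI : IsNoetherian R Q := isNoetherian_of_isNoetherianRing_of_finite R Q
  have hpres : ∀ X : Submodule R Q, ∃ nK : Σ m : ℕ, Submodule R (Fin m → R),
      Nonempty (X ≃ₗ[R] ((Fin nK.1 → R) ⧸ nK.2)) := by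
    intro X
    haveI : IsNoetherian R X := inferInstance
    haveI : Module.Finite R X := Module.finite_def.2 (IsNoetherian.noetherian ⊤)
    obtain ⟨m, fsur, hfsur⟩ := Module.Finite.exists_fin' R X
    exact ⟨⟨m, LinearMap.ker fsur⟩, ⟨(LinearMap.quotKerEquivOfSurjective fsur hfsur).symm⟩⟩
  set P : Finset (Fin n) → Prop := fun t => ∃ e : E, e * e = e ∧
    Nonempty ((Submodule.span S {σ e} : Submodule S S) ≃ₗ[S]
      (S ⧸ (t.sup T : Submodule S S))) with hP
  set rep0 : Finset (Fin n) → Σ m : ℕ, Submodule R (Fin m → R) := fun t =>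
    if h : P t then (hpres (LinearMap.range h.choose)).choose else ⟨0, ⊥⟩ with hrep0
  set eqv := Fintype.equivFin (Finset (Fin n)) with heqv
  refine ⟨Fintype.card (Finset (Fin n)), fun i => rep0 (eqv.symm i), ?_⟩
  intro M M' _ _ _ _ hiso
  obtain ⟨φ⟩ := hiso
  obtain ⟨e, he, ⟨ηM⟩⟩ := aux_summand_idempotent (R := R) (Q := Q) φ
  obtain ⟨t, ⟨ψ⟩⟩ := hT (Submodule.span S {σ e})
  have hPt : P t := ⟨e, he, ⟨ψ⟩⟩
  refine ⟨eqv t, ?_⟩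
  have hst : eqv.symm (eqv t) = t := eqv.symm_apply_apply t
  beta_reduce
  rw [hst]
  have he₀idem : hPt.choose * hPt.choose = hPt.choose := hPt.choose_spec.1
  obtain ⟨ψ₀⟩ := hPt.choose_spec.2
  have ψ₁ : (Submodule.span S {σ hPt.choose} : Submodule S S) ≃ₗ[S]
      (Submodule.span S {σ e} : Submodule S S) := ψ₀.trans ψ.symm
  have hσe : σ e * σ e = σ e := by rw [← map_mul, he]
  have hσe₀ : σ hPt.choose * σ hPt.choose = σ hPt.choose := by rw [← map_mul, he₀idem]
  obtain ⟨a, b, hab, hba⟩ := aux_span_equiv_gives hσe₀ hσe ψ₁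
  obtain ⟨A, B, hA, hB, hAB, hBA⟩ :=
    aux_lift_idem_equiv σ hσsur hker he₀idem he a b hab hba
  obtain ⟨ρ⟩ := aux_range_equiv hA hB hAB hBA he₀idem he
  obtain ⟨κ⟩ := (hpres (LinearMap.range hPt.choose)).choose_spec
  have hrw : rep0 t = (hpres (LinearMap.range hPt.choose)).choose := by
    rw [hrep0]
    exact dif_pos hPt
  rw [hrw]
  exact ⟨(ηM.trans ρ.symm).trans κ⟩
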